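/- arXiv:2502.11255 — 2 statements merged into one kernel-verified Lean document; each statement's English description precedes it below -/
import Mathlib

section
/- Fix n ≥ 4 and η = (η₁, η₂, η₃, η₄, η₅) ∈ ℝ⁵, and let Ω_e(η) be the (n²−n) × (n²−n) symmetric matrix indexed by ordered pairs (i,j), i ≠ j in {1,…,n}, with entries Ω[(i,j),(i,j)] = η₁, Ω[(i,j),(j,i)] = η₂, Ω[(i,j),(i,l)] = η₃ and Ω[(i,j),(k,j)] = η₄ for k, l ∉ {i,j}, Ω[(i,j),(j,l)] = Ω[(i,j),(k,i)] = η₅ for k, l ∉ {i,j}, and Ω[(i,j),(k,l)] = 0 when {i,j} ∩ {k,l} = ∅. If Ω_e(η) is positive semidefinite then: η₁ ≥ 0; −η₁ ≤ η₂ ≤ η₁; η₅ ≥ −(η₃ + η₄)/2 − (η₂ + η₁)/(2n − 4); η₅ ≤ (η₁ + η₂ − η₃ − η₄)/2; η₅ ≥ (−η₁ + η₂ + η₃ + η₄)/2; and {(n−3)(η₃+η₄) − 2η₅ + 2η₁}² ≥ ι + κ, where ι = (η₄² + η₃²)(n² − 2n + 1) + 4η₅²(n² − 6n + 9) + 2η₃η₄(1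 − n² + 2n) and κ = η₂η₅(8n − 24) + (η₃ + η₄)η₅(12 − 4n) + 4η₂{η₂ − (η₃ + η₄)}. -/
/-- The covariance matrix `Ω_e(η)` of a weakly exchangeable dissociated latent error
array on `n` nodes, indexed by ordered pairs `(i,j)` with `i ≠ j`, with entries
`η₁` on the diagonal, `η₂` for reciprocal pairs `((i,j),(j,i))`, `η₃` for a common
sender, `η₄` for a common receiver, `η₅` for sender-receiver configurations, and `0`
for pairs of edges with disjoint node sets. -/
noncomputable def OmegaE (n : ℕ) (η₁ η₂ η₃ η₄ η₅ : ℝ) :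
    Matrix {p : Fin n × Fin n // p.1 ≠ p.2} {p : Fin n × Fin n // p.1 ≠ p.2} ℝ :=
  fun p q =>
    if p = q then η₁
    else if q.1.1 = p.1.2 ∧ q.1.2 = p.1.1 then η₂
    else if q.1.1 = p.1.1 then η₃
    else if q.1.2 = p.1.2 then η₄
    else if q.1.1 = p.1.2 ∨ q.1.2 = p.1.1 then η₅
    else 0

namespace OmegaAux

noncomputable def OT (n : ℕ) (e1 e2 e3 e4 e5 : ℝ) (p q : Fin n × Fin n) : ℝ :=
  if p.1 = p.2 ∨ q.1 = q.2 then 0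
  else if p = q then e1
  else if q.1 = p.2 ∧ q.2 = p.1 then e2
  else if q.1 = p.1 then e3
  else if q.2 = p.2 then e4
  else if q.1 = p.2 ∨ q.2 = p.1 then e5
  else 0

lemma OT_diag_left {n e1 e2 e3 e4 e5} {p q : Fin n × Fin n} (h : p.1 = p.2) :
    OT n e1 e2 e3 e4 e5 p q = 0 := by simp [OT, h]

lemma OT_diag_right {n e1 e2 e3 e4 e5} {p q : Fin n × Fin n} (h : q.1 = q.2) :
    OT n e1 e2 e3 e4 e5 p q = 0 := by simp [OT, h]

lemma omegaE_eq {n : ℕ} {e1 e2 e3 e4 e5 : ℝ} (p q : {p : Fin n × Fin n // p.1 ≠ p.2}) :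
    OmegaE n e1 e2 e3 e4 e5 p q = OT n e1 e2 e3 e4 e5 p.1 q.1 := by
  simp only [OmegaE, OT, Subtype.ext_iff]
  rw [if_neg (show ¬((p.1.1 = p.1.2) ∨ (q.1.1 = q.1.2)) from by
    push_neg; exact ⟨p.2, q.2⟩)]

noncomputable def B2 (n : ℕ) (e1 e2 e3 e4 e5 : ℝ) (x y : Fin n × Fin n → ℝ) : ℝ :=
  ∑ p : Fin n × Fin n, ∑ q : Fin n × Fin n, x p * OT n e1 e2 e3 e4 e5 p q * y q

lemma sum_sub_eq {n : ℕ} (g : Fin n × Fin n → ℝ) (hg : ∀ q : Fin n × Fin n, q.1 = q.2 → g q = 0) :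
    ∑ q : {p : Fin n × Fin n // p.1 ≠ p.2}, g q.1 = ∑ q : Fin n × Fin n, g q := by
  classical
  rw [← Finset.sum_subtype (Finset.univ.filter (fun q : Fin n × Fin n => q.1 ≠ q.2))
    (by simp) g, Finset.sum_filter]
  apply Finset.sum_congr rfl
  intro q _
  by_cases h : q.1 = q.2
  · simp [h, hg q h]
  · simp [h]

lemma dot_eq_B2 {n : ℕ} {e1 e2 e3 e4 e5 : ℝ} (x y : Fin n × Fin n → ℝ) :
    dotProduct (fun p : {p : Fin n × Fin n // p.1 ≠ p.2} => x p.1)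
      ((OmegaE n e1 e2 e3 e4 e5).mulVec (fun p => y p.1)) = B2 n e1 e2 e3 e4 e5 x y := by
  classical
  unfold dotProduct Matrix.mulVec dotProduct B2
  simp only [omegaE_eq]
  rw [sum_sub_eq (fun pp => x pp * ∑ q : {p : Fin n × Fin n // p.1 ≠ p.2},
      OT n e1 e2 e3 e4 e5 pp q.1 * y q.1)
    (fun pp hpp => by simp [OT_diag_left hpp])]
  apply Finset.sum_congr rfl
  intro p _
  rw [sum_sub_eq (fun q => OT n e1 e2 e3 e4 e5 p q * y q)
    (fun q hq => by simp [OT_diag_right hq]), Finset.mul_sum]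
  simp [mul_assoc]

end OmegaAux

namespace OmegaAux
variable {n : ℕ} {e1 e2 e3 e4 e5 : ℝ}

lemma B2_add_left (x y z : Fin n × Fin n → ℝ) :
    B2 n e1 e2 e3 e4 e5 (x + y) z = B2 n e1 e2 e3 e4 e5 x z + B2 n e1 e2 e3 e4 e5 y z := by
  simp [B2, add_mul, Finset.sum_add_distrib]

lemma B2_sub_left (x y z : Fin n × Fin n → ℝ) :
    B2 n e1 e2 e3 e4 e5 (x - y) z = B2 n e1 e2 e3 e4 e5 x z - B2 n e1 e2 e3 e4 e5 y z := by
  simp [B2, sub_mul, Finset.sum_sub_distrib]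

lemma B2_add_right (x y z : Fin n × Fin n → ℝ) :
    B2 n e1 e2 e3 e4 e5 x (y + z) = B2 n e1 e2 e3 e4 e5 x y + B2 n e1 e2 e3 e4 e5 x z := by
  simp [B2, mul_add, Finset.sum_add_distrib]

lemma B2_sub_right (x y z : Fin n × Fin n → ℝ) :
    B2 n e1 e2 e3 e4 e5 x (y - z) = B2 n e1 e2 e3 e4 e5 x y - B2 n e1 e2 e3 e4 e5 x z := by
  simp [B2, mul_sub, Finset.sum_sub_distrib]

lemma B2_smul_left (t : ℝ) (x z : Fin n × Fin n → ℝ) :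
    B2 n e1 e2 e3 e4 e5 (t • x) z = t * B2 n e1 e2 e3 e4 e5 x z := by
  simp only [B2, Finset.mul_sum, Pi.smul_apply, smul_eq_mul]
  apply Finset.sum_congr rfl; intro p _
  apply Finset.sum_congr rfl; intro q _
  ring

/-- delta vector -/
noncomputable def Dv (n : ℕ) (a : Fin n × Fin n) : Fin n × Fin n → ℝ := fun p => if p = a then 1 else 0
/-- row indicator -/
noncomputable def Xv (n : ℕ) (r : Fin n) : Fin n × Fin n → ℝ := fun p => if p.1 = r then 1 else 0
/-- column indicator -/
noncomputable def Yv (n : ℕ) (r : Fin n) : Fin n × Fin n → ℝ := fun p => if p.2 = r then 1 else 0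

lemma B2_delta (a b : Fin n × Fin n) :
    B2 n e1 e2 e3 e4 e5 (Dv n a) (Dv n b) = OT n e1 e2 e3 e4 e5 a b := by
  simp [B2, Dv, ite_mul, mul_ite, Finset.sum_ite_eq']

-- collapse lemmas
lemma sum_fst (r : Fin n) (F : Fin n × Fin n → ℝ) :
    ∑ p : Fin n × Fin n, (if p.1 = r then F p else 0) = ∑ j : Fin n, F (r, j) := by
  rw [Fintype.sum_prod_type]
  have : ∀ i : Fin n, ∑ j : Fin n, (if i = r then F (i, j) else 0)
      = if i = r then ∑ j : Fin n, F (i, j) else 0 := by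
    intro i; split_ifs <;> simp
  simp only [this, Finset.sum_ite_eq', Finset.mem_univ, if_true]

lemma sum_snd (r : Fin n) (F : Fin n × Fin n → ℝ) :
    ∑ p : Fin n × Fin n, (if p.2 = r then F p else 0) = ∑ i : Fin n, F (i, r) := by
  rw [Fintype.sum_prod_type]
  have : ∀ i : Fin n, ∑ j : Fin n, (if j = r then F (i, j) else 0) = F (i, r) := by
    intro i; simp [Finset.sum_ite_eq']
  simp only [this]

lemma B2_XX (r s : Fin n) :
    B2 n e1 e2 e3 e4 e5 (Xv n r) (Xv n s)
      = ∑ j : Fin n, ∑ l : Fin n, OT n e1 e2 e3 e4 e5 (r, j) (s, l) := by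
  unfold B2 Xv
  have h1 : ∀ p : Fin n × Fin n,
      ∑ q : Fin n × Fin n, (if p.1 = r then (1:ℝ) else 0) * OT n e1 e2 e3 e4 e5 p q *
        (if q.1 = s then 1 else 0)
      = if p.1 = r then ∑ l : Fin n, OT n e1 e2 e3 e4 e5 p (s, l) else 0 := by
    intro p
    rw [← sum_fst s (fun q => OT n e1 e2 e3 e4 e5 p q)]
    split_ifs with h
    · apply Finset.sum_congr rfl; intro q _; split_ifs <;> simp
    · simp
  simp only [h1]
  rw [sum_fst r (fun p => ∑ l : Fin n, OT n e1 e2 e3 e4 e5 p (s, l))]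

lemma B2_XY (r s : Fin n) :
    B2 n e1 e2 e3 e4 e5 (Xv n r) (Yv n s)
      = ∑ j : Fin n, ∑ l : Fin n, OT n e1 e2 e3 e4 e5 (r, j) (l, s) := by
  unfold B2 Xv Yv
  have h1 : ∀ p : Fin n × Fin n,
      ∑ q : Fin n × Fin n, (if p.1 = r then (1:ℝ) else 0) * OT n e1 e2 e3 e4 e5 p q *
        (if q.2 = s then 1 else 0)
      = if p.1 = r then ∑ l : Fin n, OT n e1 e2 e3 e4 e5 p (l, s) else 0 := by
    intro p
    rw [← sum_snd s (fun q => OT n e1 e2 e3 e4 e5 p q)]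
    split_ifs with h
    · apply Finset.sum_congr rfl; intro q _; split_ifs <;> simp
    · simp
  simp only [h1]
  rw [sum_fst r (fun p => ∑ l : Fin n, OT n e1 e2 e3 e4 e5 p (l, s))]

lemma B2_YX (r s : Fin n) :
    B2 n e1 e2 e3 e4 e5 (Yv n r) (Xv n s)
      = ∑ j : Fin n, ∑ l : Fin n, OT n e1 e2 e3 e4 e5 (j, r) (s, l) := by
  unfold B2 Xv Yv
  have h1 : ∀ p : Fin n × Fin n,
      ∑ q : Fin n × Fin n, (if p.2 = r then (1:ℝ) else 0) * OT n e1 e2 e3 e4 e5 p q *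
        (if q.1 = s then 1 else 0)
      = if p.2 = r then ∑ l : Fin n, OT n e1 e2 e3 e4 e5 p (s, l) else 0 := by
    intro p
    rw [← sum_fst s (fun q => OT n e1 e2 e3 e4 e5 p q)]
    split_ifs with h
    · apply Finset.sum_congr rfl; intro q _; split_ifs <;> simp
    · simp
  simp only [h1]
  rw [sum_snd r (fun p => ∑ l : Fin n, OT n e1 e2 e3 e4 e5 p (s, l))]

lemma B2_YY (r s : Fin n) :
    B2 n e1 e2 e3 e4 e5 (Yv n r) (Yv n s)
      = ∑ j : Fin n, ∑ l : Fin n, OT n e1 e2 e3 e4 e5 (j, r) (l, s) := by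
  unfold B2 Yv
  have h1 : ∀ p : Fin n × Fin n,
      ∑ q : Fin n × Fin n, (if p.2 = r then (1:ℝ) else 0) * OT n e1 e2 e3 e4 e5 p q *
        (if q.2 = s then 1 else 0)
      = if p.2 = r then ∑ l : Fin n, OT n e1 e2 e3 e4 e5 p (l, s) else 0 := by
    intro p
    rw [← sum_snd s (fun q => OT n e1 e2 e3 e4 e5 p q)]
    split_ifs with h
    · apply Finset.sum_congr rfl; intro q _; split_ifs <;> simp
    · simp
  simp only [h1]
  rw [sum_snd r (fun p => ∑ l : Fin n, OT n e1 e2 e3 e4 e5 p (l, s))]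

-- counting helpers
lemma sum_c1 (a : Fin n) (x d : ℝ) :
    ∑ l : Fin n, (if l = a then x else d) = x + ((n : ℝ) - 1) * d := by
  have : ∀ l : Fin n, (if l = a then x else d) = d + (if l = a then x - d else 0) := by
    intro l; split_ifs <;> ring
  simp only [this, Finset.sum_add_distrib, Finset.sum_const, Finset.card_univ,
    Fintype.card_fin, nsmul_eq_mul, Finset.sum_ite_eq', Finset.mem_univ, if_true]
  ring

lemma sum_c2 (a b : Fin n) (hab : a ≠ b) (x y d : ℝ) :
    ∑ l : Fin n, (if l = a then x else if l = b then y else d)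
      = x + y + ((n : ℝ) - 2) * d := by
  have : ∀ l : Fin n, (if l = a then x else if l = b then y else d)
      = d + (if l = a then x - d else 0) + (if l = b then y - d else 0) := by
    intro l
    by_cases h1 : l = a <;> by_cases h2 : l = b <;> simp_all <;> ring
  simp only [this, Finset.sum_add_distrib, Finset.sum_const, Finset.card_univ,
    Fintype.card_fin, nsmul_eq_mul, Finset.sum_ite_eq', Finset.mem_univ, if_true]
  ring

lemma sum_c3 (a b c : Fin n) (hab : a ≠ b) (hac : a ≠ c) (hbc : b ≠ c) (x y z d : ℝ) :
    ∑ l : Fin n, (if l = a then x else if l = b then y else if l = c then z else d)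
      = x + y + z + ((n : ℝ) - 3) * d := by
  have : ∀ l : Fin n, (if l = a then x else if l = b then y else if l = c then z else d)
      = d + (if l = a then x - d else 0) + (if l = b then y - d else 0)
          + (if l = c then z - d else 0) := by
    intro l
    by_cases h1 : l = a <;> by_cases h2 : l = b <;> by_cases h3 : l = c <;> simp_all <;> ring
  simp only [this, Finset.sum_add_distrib, Finset.sum_const, Finset.card_univ,
    Fintype.card_fin, nsmul_eq_mul, Finset.sum_ite_eq', Finset.mem_univ, if_true]
  ring

end OmegaAux

namespace OmegaAux
variable {n : ℕ} {e1 e2 e3 e4 e5 : ℝ}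

lemma val_A1 (r : Fin n) :
    B2 n e1 e2 e3 e4 e5 (Xv n r) (Xv n r)
      = ((n:ℝ)-1)*e1 + ((n:ℝ)-1)*((n:ℝ)-2)*e3 := by
  rw [B2_XX]
  have hj : ∀ j : Fin n, (∑ l : Fin n, OT n e1 e2 e3 e4 e5 (r,j) (r,l))
      = if j = r then 0 else e1 + ((n:ℝ)-2)*e3 + 0 := by
    intro j
    by_cases hjr : j = r
    · rw [if_pos hjr]
      exact Finset.sum_eq_zero fun l _ => OT_diag_left (by simp [hjr])
    · rw [if_neg hjr]
      have hpt : ∀ l : Fin n, OT n e1 e2 e3 e4 e5 (r,j) (r,l)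
          = if l = r then 0 else if l = j then e1 else e3 := by
        intro l
        by_cases h1 : l = r
        · simp [OT, h1]
        · by_cases h2 : l = j
          · simp [OT, h1, h2, hjr, Prod.ext_iff, Ne.symm hjr, Ne.symm h1]
          · simp [OT, h1, h2, hjr, Prod.ext_iff, Ne.symm h2, Ne.symm hjr, Ne.symm h1]
      simp only [hpt]
      rw [sum_c2 r j (Ne.symm hjr) 0 e1 e3]
      ring
  simp only [hj]
  rw [sum_c1 r 0 (e1 + ((n:ℝ)-2)*e3 + 0)]
  ring
end OmegaAux
namespace OmegaAux
variable {n : ℕ} {e1 e2 e3 e4 e5 : ℝ}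

lemma val_A2 (r s : Fin n) (hrs : r ≠ s) :
    B2 n e1 e2 e3 e4 e5 (Xv n r) (Xv n s)
      = e2 + ((n:ℝ)-2)*e4 + (2*(n:ℝ)-4)*e5 := by
  rw [B2_XX]
  have hj : ∀ j : Fin n, (∑ l : Fin n, OT n e1 e2 e3 e4 e5 (r,j) (s,l))
      = if j = r then 0 else if j = s then e2 + ((n:ℝ)-2)*e5 else e4 + e5 := by
    intro j
    by_cases hjr : j = r
    · rw [if_pos hjr]
      exact Finset.sum_eq_zero fun l _ => OT_diag_left (by simp [hjr])
    · rw [if_neg hjr]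
      by_cases hjs : j = s
      · rw [if_pos hjs]
        have hpt : ∀ l : Fin n, OT n e1 e2 e3 e4 e5 (r,j) (s,l)
            = if l = s then 0 else if l = r then e2 else e5 := by
          intro l
          by_cases h1 : l = s
          · simp [OT, h1]
          · by_cases h2 : l = r
            · simp [OT, hjs, h1, h2, hrs, Ne.symm hrs, Ne.symm h1, Prod.ext_iff]
            · simp [OT, hjs, h1, h2, hrs, Ne.symm hrs, Ne.symm h1, Ne.symm h2, Prod.ext_iff]
        simp only [hpt]
        rw [sum_c2 s r (Ne.symm hrs) 0 e2 e5]
        ring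
      · rw [if_neg hjs]
        have hpt : ∀ l : Fin n, OT n e1 e2 e3 e4 e5 (r,j) (s,l)
            = if l = s then 0 else if l = j then e4 else if l = r then e5 else 0 := by
          intro l
          by_cases h1 : l = s
          · simp [OT, h1]
          · by_cases h2 : l = j
            · simp [OT, h1, h2, hjr, hjs, Ne.symm hjr, Ne.symm hjs, Ne.symm h1, hrs,
                Ne.symm hrs, Prod.ext_iff]
            · by_cases h3 : l = r
              · simp [OT, h1, h2, h3, hjr, hjs, Ne.symm hjr, Ne.symm hjs, Ne.symm h1,
                  Ne.symm h2, hrs, Ne.symm hrs, Prod.ext_iff]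
              · simp [OT, h1, h2, h3, hjr, hjs, Ne.symm hjr, Ne.symm hjs, Ne.symm h1,
                  Ne.symm h2, Ne.symm h3, hrs, Ne.symm hrs, Prod.ext_iff]
        simp only [hpt]
        rw [sum_c3 s j r (fun h => hjs (h.symm)) (Ne.symm hrs) hjr 0 e4 e5 0]
        ring
  simp only [hj]
  rw [sum_c2 r s hrs 0 (e2 + ((n:ℝ)-2)*e5) (e4 + e5)]
  ring

lemma val_C1 (r : Fin n) :
    B2 n e1 e2 e3 e4 e5 (Yv n r) (Yv n r)
      = ((n:ℝ)-1)*e1 + ((n:ℝ)-1)*((n:ℝ)-2)*e4 := by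
  rw [B2_YY]
  have hj : ∀ j : Fin n, (∑ l : Fin n, OT n e1 e2 e3 e4 e5 (j,r) (l,r))
      = if j = r then 0 else e1 + ((n:ℝ)-2)*e4 + 0 := by
    intro j
    by_cases hjr : j = r
    · rw [if_pos hjr]
      exact Finset.sum_eq_zero fun l _ => OT_diag_left (by simp [hjr])
    · rw [if_neg hjr]
      have hpt : ∀ l : Fin n, OT n e1 e2 e3 e4 e5 (j,r) (l,r)
          = if l = r then 0 else if l = j then e1 else e4 := by
        intro l
        by_cases h1 : l = r
        · simp [OT, h1]
        · by_cases h2 : l = j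
          · simp [OT, h1, h2, hjr, Ne.symm hjr, Ne.symm h1, Prod.ext_iff]
          · simp [OT, h1, h2, hjr, Ne.symm hjr, Ne.symm h1, Ne.symm h2, Prod.ext_iff]
      simp only [hpt]
      rw [sum_c2 r j (Ne.symm hjr) 0 e1 e4]
      ring
  simp only [hj]
  rw [sum_c1 r 0 (e1 + ((n:ℝ)-2)*e4 + 0)]
  ring

lemma val_C2 (r s : Fin n) (hrs : r ≠ s) :
    B2 n e1 e2 e3 e4 e5 (Yv n r) (Yv n s)
      = e2 + ((n:ℝ)-2)*e3 + (2*(n:ℝ)-4)*e5 := by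
  rw [B2_YY]
  have hj : ∀ j : Fin n, (∑ l : Fin n, OT n e1 e2 e3 e4 e5 (j,r) (l,s))
      = if j = r then 0 else if j = s then e2 + ((n:ℝ)-2)*e5 else e3 + e5 := by
    intro j
    by_cases hjr : j = r
    · rw [if_pos hjr]
      exact Finset.sum_eq_zero fun l _ => OT_diag_left (by simp [hjr])
    · rw [if_neg hjr]
      by_cases hjs : j = s
      · rw [if_pos hjs]
        have hpt : ∀ l : Fin n, OT n e1 e2 e3 e4 e5 (j,r) (l,s)
            = if l = s then 0 else if l = r then e2 else e5 := by
          intro l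
          by_cases h1 : l = s
          · simp [OT, h1]
          · by_cases h2 : l = r
            · simp [OT, hjs, h1, h2, hrs, Ne.symm hrs, Ne.symm h1, Prod.ext_iff]
            · simp [OT, hjs, h1, h2, hrs, Ne.symm hrs, Ne.symm h1, Ne.symm h2, Prod.ext_iff]
        simp only [hpt]
        rw [sum_c2 s r (Ne.symm hrs) 0 e2 e5]
        ring
      · rw [if_neg hjs]
        have hpt : ∀ l : Fin n, OT n e1 e2 e3 e4 e5 (j,r) (l,s)
            = if l = s then 0 else if l = j then e3 else if l = r then e5 else 0 := by
          intro l
          by_cases h1 : l = s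
          · simp [OT, h1]
          · by_cases h2 : l = j
            · simp [OT, h1, h2, hjr, hjs, Ne.symm hjr, Ne.symm hjs, Ne.symm h1, hrs,
                Ne.symm hrs, Prod.ext_iff]
            · by_cases h3 : l = r
              · simp [OT, h1, h2, h3, hjr, hjs, Ne.symm hjr, Ne.symm hjs, Ne.symm h1,
                  Ne.symm h2, hrs, Ne.symm hrs, Prod.ext_iff]
              · simp [OT, h1, h2, h3, hjr, hjs, Ne.symm hjr, Ne.symm hjs, Ne.symm h1,
                  Ne.symm h2, Ne.symm h3, hrs, Ne.symm hrs, Prod.ext_iff]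
        simp only [hpt]
        rw [sum_c3 s j r (fun h => hjs (h.symm)) (Ne.symm hrs) hjr 0 e3 e5 0]
        ring
  simp only [hj]
  rw [sum_c2 r s hrs 0 (e2 + ((n:ℝ)-2)*e5) (e3 + e5)]
  ring

lemma val_D1 (r : Fin n) :
    B2 n e1 e2 e3 e4 e5 (Xv n r) (Yv n r)
      = ((n:ℝ)-1)*e2 + ((n:ℝ)-1)*((n:ℝ)-2)*e5 := by
  rw [B2_XY]
  have hj : ∀ j : Fin n, (∑ l : Fin n, OT n e1 e2 e3 e4 e5 (r,j) (l,r))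
      = if j = r then 0 else e2 + ((n:ℝ)-2)*e5 + 0 := by
    intro j
    by_cases hjr : j = r
    · rw [if_pos hjr]
      exact Finset.sum_eq_zero fun l _ => OT_diag_left (by simp [hjr])
    · rw [if_neg hjr]
      have hpt : ∀ l : Fin n, OT n e1 e2 e3 e4 e5 (r,j) (l,r)
          = if l = r then 0 else if l = j then e2 else e5 := by
        intro l
        by_cases h1 : l = r
        · simp [OT, h1]
        · by_cases h2 : l = j
          · simp [OT, h1, h2, hjr, Ne.symm hjr, Ne.symm h1, Prod.ext_iff]
          · simp [OT, h1, h2, hjr, Ne.symm hjr, Ne.symm h1, Ne.symm h2, Prod.ext_iff]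
      simp only [hpt]
      rw [sum_c2 r j (Ne.symm hjr) 0 e2 e5]
      ring
  simp only [hj]
  rw [sum_c1 r 0 (e2 + ((n:ℝ)-2)*e5 + 0)]
  ring

lemma val_D2 (r s : Fin n) (hrs : r ≠ s) :
    B2 n e1 e2 e3 e4 e5 (Xv n r) (Yv n s)
      = e1 + ((n:ℝ)-2)*(e3+e4+e5) := by
  rw [B2_XY]
  have hj : ∀ j : Fin n, (∑ l : Fin n, OT n e1 e2 e3 e4 e5 (r,j) (l,s))
      = if j = r then 0 else if j = s then e1 + ((n:ℝ)-2)*e4 else e3 + e5 := by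
    intro j
    by_cases hjr : j = r
    · rw [if_pos hjr]
      exact Finset.sum_eq_zero fun l _ => OT_diag_left (by simp [hjr])
    · rw [if_neg hjr]
      by_cases hjs : j = s
      · rw [if_pos hjs]
        have hpt : ∀ l : Fin n, OT n e1 e2 e3 e4 e5 (r,j) (l,s)
            = if l = s then 0 else if l = r then e1 else e4 := by
          intro l
          by_cases h1 : l = s
          · simp [OT, h1]
          · by_cases h2 : l = r
            · simp [OT, hjs, h1, h2, hrs, Ne.symm hrs, Ne.symm h1, Prod.ext_iff]
            · simp [OT, hjs, h1, h2, hrs, Ne.symm hrs, Ne.symm h1, Ne.symm h2, Prod.ext_iff]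
        simp only [hpt]
        rw [sum_c2 s r (Ne.symm hrs) 0 e1 e4]
        ring
      · rw [if_neg hjs]
        have hpt : ∀ l : Fin n, OT n e1 e2 e3 e4 e5 (r,j) (l,s)
            = if l = s then 0 else if l = r then e3 else if l = j then e5 else 0 := by
          intro l
          by_cases h1 : l = s
          · simp [OT, h1]
          · by_cases h2 : l = r
            · simp [OT, h1, h2, hjr, hjs, Ne.symm hjr, Ne.symm hjs, Ne.symm h1, hrs,
                Ne.symm hrs, Prod.ext_iff]
            · by_cases h3 : l = j
              · simp [OT, h1, h2, h3, hjr, hjs, Ne.symm hjr, Ne.symm hjs, Ne.symm h1,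
                  Ne.symm h2, hrs, Ne.symm hrs, Prod.ext_iff]
              · simp [OT, h1, h2, h3, hjr, hjs, Ne.symm hjr, Ne.symm hjs, Ne.symm h1,
                  Ne.symm h2, Ne.symm h3, hrs, Ne.symm hrs, Prod.ext_iff]
        simp only [hpt]
        rw [sum_c3 s r j (Ne.symm hrs) (fun h => hjs (h.symm)) (fun h => hjr (h.symm)) 0 e3 e5 0]
        ring
  simp only [hj]
  rw [sum_c2 r s hrs 0 (e1 + ((n:ℝ)-2)*e4) (e3 + e5)]
  ring

lemma val_E1 (r : Fin n) :
    B2 n e1 e2 e3 e4 e5 (Yv n r) (Xv n r)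
      = ((n:ℝ)-1)*e2 + ((n:ℝ)-1)*((n:ℝ)-2)*e5 := by
  rw [B2_YX]
  have hj : ∀ j : Fin n, (∑ l : Fin n, OT n e1 e2 e3 e4 e5 (j,r) (r,l))
      = if j = r then 0 else e2 + ((n:ℝ)-2)*e5 + 0 := by
    intro j
    by_cases hjr : j = r
    · rw [if_pos hjr]
      exact Finset.sum_eq_zero fun l _ => OT_diag_left (by simp [hjr])
    · rw [if_neg hjr]
      have hpt : ∀ l : Fin n, OT n e1 e2 e3 e4 e5 (j,r) (r,l)
          = if l = r then 0 else if l = j then e2 else e5 := by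
        intro l
        by_cases h1 : l = r
        · simp [OT, h1]
        · by_cases h2 : l = j
          · simp [OT, h1, h2, hjr, Ne.symm hjr, Ne.symm h1, Prod.ext_iff]
          · simp [OT, h1, h2, hjr, Ne.symm hjr, Ne.symm h1, Ne.symm h2, Prod.ext_iff]
      simp only [hpt]
      rw [sum_c2 r j (Ne.symm hjr) 0 e2 e5]
      ring
  simp only [hj]
  rw [sum_c1 r 0 (e2 + ((n:ℝ)-2)*e5 + 0)]
  ring

lemma val_E2 (r s : Fin n) (hrs : r ≠ s) :
    B2 n e1 e2 e3 e4 e5 (Yv n r) (Xv n s)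
      = e1 + ((n:ℝ)-2)*(e3+e4+e5) := by
  rw [B2_YX]
  have hj : ∀ j : Fin n, (∑ l : Fin n, OT n e1 e2 e3 e4 e5 (j,r) (s,l))
      = if j = r then 0 else if j = s then e1 + ((n:ℝ)-2)*e3 else e4 + e5 := by
    intro j
    by_cases hjr : j = r
    · rw [if_pos hjr]
      exact Finset.sum_eq_zero fun l _ => OT_diag_left (by simp [hjr])
    · rw [if_neg hjr]
      by_cases hjs : j = s
      · rw [if_pos hjs]
        have hpt : ∀ l : Fin n, OT n e1 e2 e3 e4 e5 (j,r) (s,l)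
            = if l = s then 0 else if l = r then e1 else e3 := by
          intro l
          by_cases h1 : l = s
          · simp [OT, h1]
          · by_cases h2 : l = r
            · simp [OT, hjs, h1, h2, hrs, Ne.symm hrs, Ne.symm h1, Prod.ext_iff]
            · simp [OT, hjs, h1, h2, hrs, Ne.symm hrs, Ne.symm h1, Ne.symm h2, Prod.ext_iff]
        simp only [hpt]
        rw [sum_c2 s r (Ne.symm hrs) 0 e1 e3]
        ring
      · rw [if_neg hjs]
        have hpt : ∀ l : Fin n, OT n e1 e2 e3 e4 e5 (j,r) (s,l)
            = if l = s then 0 else if l = r then e4 else if l = j then e5 else 0 := by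
          intro l
          by_cases h1 : l = s
          · simp [OT, h1]
          · by_cases h2 : l = r
            · simp [OT, h1, h2, hjr, hjs, Ne.symm hjr, Ne.symm hjs, Ne.symm h1, hrs,
                Ne.symm hrs, Prod.ext_iff]
            · by_cases h3 : l = j
              · simp [OT, h1, h2, h3, hjr, hjs, Ne.symm hjr, Ne.symm hjs, Ne.symm h1,
                  Ne.symm h2, hrs, Ne.symm hrs, Prod.ext_iff]
              · simp [OT, h1, h2, h3, hjr, hjs, Ne.symm hjr, Ne.symm hjs, Ne.symm h1,
                  Ne.symm h2, Ne.symm h3, hrs, Ne.symm hrs, Prod.ext_iff]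
        simp only [hpt]
        rw [sum_c3 s r j (Ne.symm hrs) (fun h => hjs (h.symm)) (fun h => hjr (h.symm)) 0 e4 e5 0]
        ring
  simp only [hj]
  rw [sum_c2 r s hrs 0 (e1 + ((n:ℝ)-2)*e3) (e4 + e5)]
  ring

end OmegaAux

namespace OmegaAux
variable {n : ℕ} {e1 e2 e3 e4 e5 : ℝ}

lemma B2_smul_right (t : ℝ) (x z : Fin n × Fin n → ℝ) :
    B2 n e1 e2 e3 e4 e5 x (t • z) = t * B2 n e1 e2 e3 e4 e5 x z := by
  simp only [B2, Finset.mul_sum, Pi.smul_apply, smul_eq_mul]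
  apply Finset.sum_congr rfl; intro p _
  apply Finset.sum_congr rfl; intro q _
  ring

lemma val_single (a b : Fin n) (hab : a ≠ b) :
    B2 n e1 e2 e3 e4 e5 (Dv n (a,b)) (Dv n (a,b)) = e1 := by
  rw [B2_delta]
  simp [OT, Prod.ext_iff, hab]

lemma val_pair_plus (a b : Fin n) (hab : a ≠ b) :
    B2 n e1 e2 e3 e4 e5 (Dv n (a,b) + Dv n (b,a)) (Dv n (a,b) + Dv n (b,a))
      = 2*e1 + 2*e2 := by
  simp only [B2_add_left, B2_add_right, B2_delta]
  simp [OT, Prod.ext_iff, hab, Ne.symm hab]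
  ring

lemma val_pair_minus (a b : Fin n) (hab : a ≠ b) :
    B2 n e1 e2 e3 e4 e5 (Dv n (a,b) - Dv n (b,a)) (Dv n (a,b) - Dv n (b,a))
      = 2*e1 - 2*e2 := by
  simp only [B2_sub_left, B2_sub_right, B2_delta]
  simp [OT, Prod.ext_iff, hab, Ne.symm hab]
  ring

lemma val_tri (a b c : Fin n) (hab : a ≠ b) (hac : a ≠ c) (hbc : b ≠ c) :
    B2 n e1 e2 e3 e4 e5
      ((Dv n (a,b) - Dv n (b,a)) + (Dv n (b,c) - Dv n (c,b)) + (Dv n (c,a) - Dv n (a,c)))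
      ((Dv n (a,b) - Dv n (b,a)) + (Dv n (b,c) - Dv n (c,b)) + (Dv n (c,a) - Dv n (a,c)))
      = 6*e1 - 6*e2 - 6*e3 - 6*e4 + 12*e5 := by
  simp only [B2_add_left, B2_add_right, B2_sub_left, B2_sub_right, B2_delta]
  simp [OT, Prod.ext_iff, hab, hac, hbc, Ne.symm hab, Ne.symm hac, Ne.symm hbc]
  ring

lemma val_quad (a b c d : Fin n) (hab : a ≠ b) (hac : a ≠ c) (had : a ≠ d)
    (hbc : b ≠ c) (hbd : b ≠ d) (hcd : c ≠ d) :
    B2 n e1 e2 e3 e4 e5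
      ((Dv n (a,b) + Dv n (b,a)) - (Dv n (b,c) + Dv n (c,b))
        + (Dv n (c,d) + Dv n (d,c)) - (Dv n (d,a) + Dv n (a,d)))
      ((Dv n (a,b) + Dv n (b,a)) - (Dv n (b,c) + Dv n (c,b))
        + (Dv n (c,d) + Dv n (d,c)) - (Dv n (d,a) + Dv n (a,d)))
      = 8*e1 + 8*e2 - 8*e3 - 8*e4 - 16*e5 := by
  simp only [B2_add_left, B2_add_right, B2_sub_left, B2_sub_right, B2_delta]
  simp [OT, Prod.ext_iff, hab, hac, had, hbc, hbd, hcd,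
    Ne.symm hab, Ne.symm hac, Ne.symm had, Ne.symm hbc, Ne.symm hbd, Ne.symm hcd]
  ring

lemma val_star (r : Fin n) :
    B2 n e1 e2 e3 e4 e5 (Xv n r + Yv n r) (Xv n r + Yv n r)
      = 2*((n:ℝ)-1)*e1 + 2*((n:ℝ)-1)*e2 + ((n:ℝ)-1)*((n:ℝ)-2)*(e3+e4)
        + 2*((n:ℝ)-1)*((n:ℝ)-2)*e5 := by
  simp only [B2_add_left, B2_add_right, val_A1, val_C1, val_D1, val_E1]
  ring

end OmegaAux

namespace OmegaAux
variable {n : ℕ} {e1 e2 e3 e4 e5 : ℝ}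

lemma val_ones :
    B2 n e1 e2 e3 e4 e5 (fun _ => 1) (fun _ => 1)
      = (n:ℝ)*((n:ℝ)-1) * (e1 + e2 + ((n:ℝ)-2)*(e3+e4) + 2*((n:ℝ)-2)*e5) := by
  have h4 : B2 n e1 e2 e3 e4 e5 (fun _ => 1) (fun _ => 1)
      = ∑ i : Fin n, ∑ j : Fin n, ∑ k : Fin n, ∑ l : Fin n,
          OT n e1 e2 e3 e4 e5 (i,j) (k,l) := by
    simp only [B2, one_mul, mul_one, Fintype.sum_prod_type]
  rw [h4]
  have hj : ∀ i j : Fin n, (∑ k : Fin n, ∑ l : Fin n, OT n e1 e2 e3 e4 e5 (i,j) (k,l))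
      = if j = i then 0 else e1 + e2 + ((n:ℝ)-2)*(e3+e4) + 2*((n:ℝ)-2)*e5 := by
    intro i j
    by_cases hji : j = i
    · rw [if_pos hji]
      exact Finset.sum_eq_zero fun k _ => Finset.sum_eq_zero fun l _ =>
        OT_diag_left (by simp [hji])
    · rw [if_neg hji]
      have hk : ∀ k : Fin n, (∑ l : Fin n, OT n e1 e2 e3 e4 e5 (i,j) (k,l))
          = if k = i then 0 + e1 + ((n:ℝ)-2)*e3
            else if k = j then 0 + e2 + ((n:ℝ)-2)*e5
            else 0 + e4 + e5 + ((n:ℝ)-3)*0 := by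
        intro k
        by_cases hki : k = i
        · rw [if_pos hki]
          have hpt : ∀ l : Fin n, OT n e1 e2 e3 e4 e5 (i,j) (k,l)
              = if l = i then 0 else if l = j then e1 else e3 := by
            intro l
            by_cases m1 : l = i
            · simp [OT, hki, m1]
            · by_cases m2 : l = j
              · simp [OT, hki, m1, m2, hji, Ne.symm hji, Ne.symm m1, Prod.ext_iff]
              · simp [OT, hki, m1, m2, hji, Ne.symm hji, Ne.symm m1, Ne.symm m2, Prod.ext_iff]
          simp only [hpt]
          exact sum_c2 i j (fun h => hji h.symm) 0 e1 e3
        · rw [if_neg hki]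
          by_cases hkj : k = j
          · rw [if_pos hkj]
            have hpt : ∀ l : Fin n, OT n e1 e2 e3 e4 e5 (i,j) (k,l)
                = if l = j then 0 else if l = i then e2 else e5 := by
              intro l
              by_cases m1 : l = j
              · simp [OT, hkj, m1]
              · by_cases m2 : l = i
                · simp [OT, hkj, m1, m2, hji, Ne.symm hji, Ne.symm m1, Prod.ext_iff]
                · simp [OT, hkj, m1, m2, hji, Ne.symm hji, Ne.symm m1, Ne.symm m2,
                    Prod.ext_iff]
            simp only [hpt]
            exact sum_c2 j i hji 0 e2 e5
          · rw [if_neg hkj]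
            have hpt : ∀ l : Fin n, OT n e1 e2 e3 e4 e5 (i,j) (k,l)
                = if l = k then 0 else if l = j then e4 else if l = i then e5 else 0 := by
              intro l
              by_cases m1 : l = k
              · simp [OT, m1]
              · by_cases m2 : l = j
                · simp [OT, m1, m2, hki, hkj, hji, Ne.symm hji, Ne.symm m1,
                    Ne.symm hki, Ne.symm hkj, Prod.ext_iff]
                · by_cases m3 : l = i
                  · simp [OT, m1, m2, m3, hki, hkj, hji, Ne.symm hji, Ne.symm m1,
                      Ne.symm m2, Ne.symm hki, Ne.symm hkj, Prod.ext_iff]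
                  · simp [OT, m1, m2, m3, hki, hkj, hji, Ne.symm hji, Ne.symm m1,
                      Ne.symm m2, Ne.symm m3, Ne.symm hki, Ne.symm hkj, Prod.ext_iff]
            simp only [hpt]
            exact sum_c3 k j i hkj hki hji 0 e4 e5 0
      simp only [hk]
      rw [sum_c2 i j (fun h => hji h.symm) (0 + e1 + ((n:ℝ)-2)*e3)
        (0 + e2 + ((n:ℝ)-2)*e5) (0 + e4 + e5 + ((n:ℝ)-3)*0)]
      ring
  simp only [hj]
  have : ∀ i : Fin n, (∑ j : Fin n, if j = i then (0:ℝ)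
      else e1 + e2 + ((n:ℝ)-2)*(e3+e4) + 2*((n:ℝ)-2)*e5)
      = 0 + ((n:ℝ)-1) * (e1 + e2 + ((n:ℝ)-2)*(e3+e4) + 2*((n:ℝ)-2)*e5) := by
    intro i
    exact sum_c1 i 0 _
  simp only [this]
  rw [Finset.sum_const, Finset.card_univ, Fintype.card_fin, nsmul_eq_mul]
  ring

end OmegaAux

open OmegaAux

/-- **Necessary conditions on `η` for the non-negative definiteness of `Ω_e`**
(the paper's parameter space `𝓜ⁿ(η₁,…,η₅)`). -/
theorem posSemidef_OmegaE_param_space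
    (n : ℕ) (hn : 4 ≤ n) (η₁ η₂ η₃ η₄ η₅ : ℝ)
    (hΩ : (OmegaE n η₁ η₂ η₃ η₄ η₅).PosSemidef) :
    0 ≤ η₁ ∧
    -η₁ ≤ η₂ ∧ η₂ ≤ η₁ ∧
    η₅ ≥ -(η₃ + η₄) / 2 - (η₂ + η₁) / (2 * (n : ℝ) - 4) ∧
    η₅ ≤ (η₁ + η₂ - η₃ - η₄) / 2 ∧
    η₅ ≥ (-η₁ + η₂ + η₃ + η₄) / 2 ∧
    (((n : ℝ) - 3) * (η₃ + η₄) - 2 * η₅ + 2 * η₁) ^ 2 ≥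
      ((η₄ ^ 2 + η₃ ^ 2) * ((n : ℝ) ^ 2 - 2 * n + 1) + 4 * η₅ ^ 2 * ((n : ℝ) ^ 2 - 6 * n + 9)
          + 2 * η₃ * η₄ * (1 - (n : ℝ) ^ 2 + 2 * n))
        + (η₂ * η₅ * (8 * (n : ℝ) - 24) + (η₃ + η₄) * η₅ * (12 - 4 * (n : ℝ))
          + 4 * η₂ * (η₂ - (η₃ + η₄))) := by
  have hcast : (4:ℝ) ≤ (n:ℝ) := by exact_mod_cast hn
  have key : ∀ x : Fin n × Fin n → ℝ, 0 ≤ B2 n η₁ η₂ η₃ η₄ η₅ x x := by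
    intro x
    have h := hΩ.dotProduct_mulVec_nonneg (fun p => x p.1)
    have hstar : (star fun p : {p : Fin n × Fin n // p.1 ≠ p.2} => x p.1)
        = fun p : {p : Fin n × Fin n // p.1 ≠ p.2} => x p.1 := by
      funext p; exact star_trivial _
    rw [hstar, dot_eq_B2] at h
    exact h
  have h0 : 0 < n := by omega
  have h1 : 1 < n := by omega
  have h2 : 2 < n := by omega
  have h3 : 3 < n := by omega
  set f0 : Fin n := ⟨0, h0⟩ with hf0
  set f1 : Fin n := ⟨1, h1⟩ with hf1
  set f2 : Fin n := ⟨2, h2⟩ with hf2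
  set f3 : Fin n := ⟨3, h3⟩ with hf3
  have ne01 : f0 ≠ f1 := by simp [hf0, hf1, Fin.ext_iff]
  have ne02 : f0 ≠ f2 := by simp [hf0, hf2, Fin.ext_iff]
  have ne03 : f0 ≠ f3 := by simp [hf0, hf3, Fin.ext_iff]
  have ne12 : f1 ≠ f2 := by simp [hf1, hf2, Fin.ext_iff]
  have ne13 : f1 ≠ f3 := by simp [hf1, hf3, Fin.ext_iff]
  have ne23 : f2 ≠ f3 := by simp [hf2, hf3, Fin.ext_iff]
  have I1 : 0 ≤ η₁ := by
    have h := key (Dv n (f0, f1))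
    rwa [val_single f0 f1 ne01] at h
  have I2 : -η₁ ≤ η₂ := by
    have h := key (Dv n (f0,f1) + Dv n (f1,f0))
    rw [val_pair_plus f0 f1 ne01] at h
    linarith
  have I3 : η₂ ≤ η₁ := by
    have h := key (Dv n (f0,f1) - Dv n (f1,f0))
    rw [val_pair_minus f0 f1 ne01] at h
    linarith
  have I4 : η₅ ≥ -(η₃ + η₄) / 2 - (η₂ + η₁) / (2 * (n : ℝ) - 4) := by
    have h := key (fun _ => 1)
    rw [val_ones] at h
    have hW : 0 ≤ η₁ + η₂ + ((n:ℝ)-2)*(η₃+η₄) + 2*((n:ℝ)-2)*η₅ := by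
      nlinarith [h, hcast, mul_pos (show (0:ℝ) < (n:ℝ) by linarith)
        (show (0:ℝ) < (n:ℝ)-1 by linarith)]
    rw [ge_iff_le, div_sub_div _ _ two_ne_zero (by linarith : 2*(n:ℝ)-4 ≠ 0),
      div_le_iff₀ (by nlinarith : (0:ℝ) < 2*(2*(n:ℝ)-4))]
    nlinarith [hW]
  have I5 : η₅ ≤ (η₁ + η₂ - η₃ - η₄) / 2 := by
    have h := key ((Dv n (f0,f1) + Dv n (f1,f0)) - (Dv n (f1,f2) + Dv n (f2,f1))
        + (Dv n (f2,f3) + Dv n (f3,f2)) - (Dv n (f3,f0) + Dv n (f0,f3)))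
    rw [val_quad f0 f1 f2 f3 ne01 ne02 ne03 ne12 ne13 ne23] at h
    linarith
  have I6 : η₅ ≥ (-η₁ + η₂ + η₃ + η₄) / 2 := by
    have h := key ((Dv n (f0,f1) - Dv n (f1,f0)) + (Dv n (f1,f2) - Dv n (f2,f1))
        + (Dv n (f2,f0) - Dv n (f0,f2)))
    rw [val_tri f0 f1 f2 ne01 ne02 ne12] at h
    linarith
  refine ⟨I1, I2, I3, I4, I5, I6, ?_⟩
  -- the quadratic inequality via the 2x2 standard-representation block
  set ν : ℝ := (n : ℝ) with hν
  set xs : Fin n × Fin n → ℝ := Xv n f0 - Xv n f1 with hxs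
  set ys : Fin n × Fin n → ℝ := Yv n f0 - Yv n f1 with hys
  have hA : B2 n η₁ η₂ η₃ η₄ η₅ xs xs
      = 2*(ν-1)*η₁ - 2*η₂ + 2*(ν-1)*(ν-2)*η₃ - 2*(ν-2)*η₄ - (4*ν-8)*η₅ := by
    rw [hxs]
    simp only [B2_sub_left, B2_sub_right, val_A1, val_A2 f0 f1 ne01,
      val_A2 f1 f0 (Ne.symm ne01)]
    ring
  have hC : B2 n η₁ η₂ η₃ η₄ η₅ ys ys
      = 2*(ν-1)*η₁ - 2*η₂ - 2*(ν-2)*η₃ + 2*(ν-1)*(ν-2)*η₄ - (4*ν-8)*η₅ := by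
    rw [hys]
    simp only [B2_sub_left, B2_sub_right, val_C1, val_C2 f0 f1 ne01,
      val_C2 f1 f0 (Ne.symm ne01)]
    ring
  have hB : B2 n η₁ η₂ η₃ η₄ η₅ xs ys
      = -2*η₁ + 2*(ν-1)*η₂ - 2*(ν-2)*η₃ - 2*(ν-2)*η₄ + 2*(ν-2)^2*η₅ := by
    rw [hxs, hys]
    simp only [B2_sub_left, B2_sub_right, val_D1, val_D2 f0 f1 ne01,
      val_D2 f1 f0 (Ne.symm ne01)]
    ring
  have hB' : B2 n η₁ η₂ η₃ η₄ η₅ ys xs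
      = -2*η₁ + 2*(ν-1)*η₂ - 2*(ν-2)*η₃ - 2*(ν-2)*η₄ + 2*(ν-2)^2*η₅ := by
    rw [hxs, hys]
    simp only [B2_sub_left, B2_sub_right, val_E1, val_E2 f0 f1 ne01,
      val_E2 f1 f0 (Ne.symm ne01)]
    ring
  set Acf : ℝ := 2*(ν-1)*η₁ - 2*η₂ + 2*(ν-1)*(ν-2)*η₃ - 2*(ν-2)*η₄ - (4*ν-8)*η₅ with hAcf
  set Ccf : ℝ := 2*(ν-1)*η₁ - 2*η₂ - 2*(ν-2)*η₃ + 2*(ν-1)*(ν-2)*η₄ - (4*ν-8)*η₅ with hCcf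
  set Bcf : ℝ := -2*η₁ + 2*(ν-1)*η₂ - 2*(ν-2)*η₃ - 2*(ν-2)*η₄ + 2*(ν-2)^2*η₅ with hBcf
  have hdisc : ∀ t : ℝ, 0 ≤ Ccf * (t * t) + (2 * Bcf) * t + Acf := by
    intro t
    have h := key (t • ys + xs)
    have hexp : B2 n η₁ η₂ η₃ η₄ η₅ (t • ys + xs) (t • ys + xs)
        = Ccf * (t * t) + (2 * Bcf) * t + Acf := by
      simp only [B2_add_left, B2_add_right, B2_smul_left, B2_smul_right,
        hA, hB, hB', hC]
      ring
    rwa [hexp] at h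
  have hd := discrim_le_zero hdisc
  simp only [discrim] at hd
  have hACB : 0 ≤ Acf * Ccf - Bcf ^ 2 := by nlinarith [hd]
  have hn2 : 0 < ν * (ν - 2) := by nlinarith [hcast]
  by_contra hcon
  push_neg at hcon
  have hid : ν * (ν - 2) * ((((n : ℝ) - 3) * (η₃ + η₄) - 2 * η₅ + 2 * η₁) ^ 2 -
      (((η₄ ^ 2 + η₃ ^ 2) * ((n : ℝ) ^ 2 - 2 * n + 1) + 4 * η₅ ^ 2 * ((n : ℝ) ^ 2 - 6 * n + 9)
        + 2 * η₃ * η₄ * (1 - (n : ℝ) ^ 2 + 2 * n))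
      + (η₂ * η₅ * (8 * (n : ℝ) - 24) + (η₃ + η₄) * η₅ * (12 - 4 * (n : ℝ))
        + 4 * η₂ * (η₂ - (η₃ + η₄)))))
      = Acf * Ccf - Bcf ^ 2 := by
    rw [hAcf, hCcf, hBcf, hν]
    ring
  have hneg : ν * (ν - 2) * ((((n : ℝ) - 3) * (η₃ + η₄) - 2 * η₅ + 2 * η₁) ^ 2 -
      (((η₄ ^ 2 + η₃ ^ 2) * ((n : ℝ) ^ 2 - 2 * n + 1) + 4 * η₅ ^ 2 * ((n : ℝ) ^ 2 - 6 * n + 9)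
        + 2 * η₃ * η₄ * (1 - (n : ℝ) ^ 2 + 2 * n))
      + (η₂ * η₅ * (8 * (n : ℝ) - 24) + (η₃ + η₄) * η₅ * (12 - 4 * (n : ℝ))
        + 4 * η₂ * (η₂ - (η₃ + η₄))))) < 0 :=
    mul_neg_of_pos_of_neg hn2 (by linarith)
  rw [hid] at hneg
  linarith
end

section
/- Fix n ≥ 3 and let {ξ_{ij}}, for i ≠ j in {1,…,n}, be real random variables with E[ξ_{ij}⁴] ≤ L⁴ for all i ≠ j and some L < ∞, and which are dissociated in the sense that collections of entries indexed by disjoint node sets are independent. Let S_{3,n} = {(i,j,l) : i, j, l pairwise distinct in {1,…,n}}, so |S_{3,n}| = n(n−1)(n−2). Then there exists an absolute constant C (not depending on n or on the array) such that Var( |S_{3,n}|^{-1} Σ_{(i,j,l) ∈ S_{3,n}} ξ_{ij} ξ_{il} ) ≤ C L⁴ / n. -/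
open MeasureTheory ProbabilityTheory
open scoped NNReal ENNReal

private lemma enn_half_eq : (1:ℝ≥0∞)/2 = 1/4 + 1/4 := by
  simp only [one_div]
  have h4 : (4:ℝ≥0∞) = 2*2 := by norm_num
  rw [h4, ENNReal.mul_inv (by norm_num) (by norm_num), ← two_mul, ← mul_assoc,
    ENNReal.mul_inv_cancel two_ne_zero ENNReal.ofNat_ne_top, one_mul]

private lemma abs_mul_le_half_sq (a b : ℝ) : |a| * |b| ≤ (a^2 + b^2)/2 := by
  nlinarith [sq_nonneg (|a| - |b|), sq_abs a, sq_abs b]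

private lemma mul_le_half_sq (a b : ℝ) : a * b ≤ (a^2 + b^2)/2 := by
  nlinarith [sq_nonneg (a - b)]

set_option maxHeartbeats 2000000 in
/-- **Variance bound for the triple average in the estimator of `η₃`** (key step in the
proof of Theorem 2 of the paper). There is an absolute constant `C`, not depending on
`n` or on the array, such that for every `n ≥ 3` and every dissociated array
`{ξ_{ij}}_{i≠j}` with `E[ξ_{ij}⁴] ≤ L⁴`,
`Var(|S₃ₙ|⁻¹ Σ_{(i,j,l) pairwise distinct} ξ_{ij} ξ_{il}) ≤ C L⁴ / n`. -/
theorem variance_bound_triple_average :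
    ∃ C : ℝ, ∀ (n : ℕ), 3 ≤ n →
      ∀ (Ω : Type) [MeasurableSpace Ω] (P : Measure Ω) [IsProbabilityMeasure P]
        (ξ : Fin n → Fin n → Ω → ℝ) (L : ℝ),
        (∀ i j : Fin n, i ≠ j → MemLp (ξ i j) 4 P) →
        (∀ i j : Fin n, i ≠ j → ∫ ω, (ξ i j ω) ^ 4 ∂P ≤ L ^ 4) →
        (∀ A B : Finset (Fin n), Disjoint A B →
          IndepFun
            (fun ω => fun p : {p : Fin n × Fin n // p.1 ≠ p.2 ∧ p.1 ∈ A ∧ p.2 ∈ A} =>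
              ξ p.1.1 p.1.2 ω)
            (fun ω => fun p : {p : Fin n × Fin n // p.1 ≠ p.2 ∧ p.1 ∈ B ∧ p.2 ∈ B} =>
              ξ p.1.1 p.1.2 ω) P) →
        variance (fun ω => ((n : ℝ) * ((n : ℝ) - 1) * ((n : ℝ) - 2))⁻¹ *
            ∑ t ∈ (Finset.univ : Finset (Fin n × Fin n × Fin n)).filter
                (fun t => t.1 ≠ t.2.1 ∧ t.1 ≠ t.2.2 ∧ t.2.1 ≠ t.2.2),
              ξ t.1 t.2.1 ω * ξ t.1 t.2.2 ω) P
          ≤ C * L ^ 4 / n := by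
  classical
  refine ⟨200, ?_⟩
  intro n hn Ω _ P _ ξ L hξ4 hL4 hindep
  haveI : NeZero n := ⟨by omega⟩
  set N : ℝ := (n : ℝ) with hNdef
  have hN3 : (3:ℝ) ≤ N := by rw [hNdef]; exact_mod_cast hn
  set S : Finset (Fin n × Fin n × Fin n) :=
    (Finset.univ).filter (fun t => t.1 ≠ t.2.1 ∧ t.1 ≠ t.2.2 ∧ t.2.1 ≠ t.2.2) with hSdef
  set Y : Fin n × Fin n × Fin n → Ω → ℝ := fun t ω => ξ t.1 t.2.1 ω * ξ t.1 t.2.2 ω with hYdef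
  -- products of two entries are in L²
  have hmul2 : ∀ i j k l : Fin n, i ≠ j → k ≠ l →
      MemLp (fun ω => ξ i j ω * ξ k l ω) 2 P := by
    intro i j k l hij hkl
    have h := (hξ4 k l hkl).smul (φ := ξ i j) (hξ4 i j hij) (r := 2) (hpqr := ⟨by simpa only [one_div] using enn_half_eq.symm⟩)
    exact h
  -- fourth powers are integrable
  have h4int : ∀ i j : Fin n, i ≠ j → Integrable (fun ω => (ξ i j ω)^4) P := by
    intro i j hij
    have h := (hmul2 i j i j hij hij).integrable_sq
    have he : (fun ω => (ξ i j ω * ξ i j ω)^2) = fun ω => (ξ i j ω)^4 := by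
      funext ω; ring
    rwa [he] at h
  -- L^4 is nonnegative
  have hL4nn : 0 ≤ L ^ 4 := by
    have h01 : (0 : Fin n) ≠ (1 : Fin n) := by
      simp only [Ne, Fin.ext_iff, Fin.val_zero, Fin.val_one']
      rw [Nat.mod_eq_of_lt (by omega)]; omega
    refine le_trans ?_ (hL4 0 1 h01)
    exact integral_nonneg fun ω => by positivity
  have hY2 : ∀ t ∈ S, MemLp (Y t) 2 P := by
    intro t ht
    rw [hSdef, Finset.mem_filter] at ht
    exact hmul2 _ _ _ _ ht.2.1 ht.2.2.1
  have hYint : ∀ t ∈ S, Integrable (Y t) P := fun t ht => (hY2 t ht).integrable one_le_two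
  set m : Fin n × Fin n × Fin n → ℝ := fun t => ∫ ω, Y t ω ∂P with hmdef
  set Z : Fin n × Fin n × Fin n → Ω → ℝ := fun t ω => Y t ω - m t with hZdef
  have hZ2 : ∀ t ∈ S, MemLp (Z t) 2 P := fun t ht => (hY2 t ht).sub (memLp_const (m t))
  have hZint : ∀ t ∈ S, Integrable (Z t) P := fun t ht => (hZ2 t ht).integrable one_le_two
  have hZmean : ∀ t ∈ S, ∫ ω, Z t ω ∂P = 0 := by
    intro t ht
    have : ∫ ω, Z t ω ∂P = (∫ ω, Y t ω ∂P) - ∫ _ω, m t ∂P :=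
      integral_sub (hYint t ht) (integrable_const _)
    rw [this, integral_const]
    simp [hmdef]
  -- E[Y_t²] ≤ L⁴ and E[Z_t²] ≤ L⁴
  have hZsq : ∀ t ∈ S, ∫ ω, (Z t ω)^2 ∂P ≤ L^4 := by
    intro t ht
    obtain ⟨-, h12, h13, -⟩ := Finset.mem_filter.mp (hSdef ▸ ht)
    have hYsqint : Integrable (fun ω => (Y t ω)^2) P := (hY2 t ht).integrable_sq
    have hA := h4int t.1 t.2.1 h12
    have hB := h4int t.1 t.2.2 h13
    have hYsq : ∫ ω, (Y t ω)^2 ∂P ≤ L^4 := by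
      have hmono : ∫ ω, (Y t ω)^2 ∂P ≤
          ∫ ω, ((ξ t.1 t.2.1 ω)^4 + (ξ t.1 t.2.2 ω)^4)/2 ∂P := by
        refine integral_mono hYsqint ((hA.add hB).div_const 2) fun ω => ?_
        simp only [hYdef]
        nlinarith [sq_nonneg ((ξ t.1 t.2.1 ω)^2 - (ξ t.1 t.2.2 ω)^2)]
      have heq : ∫ ω, ((ξ t.1 t.2.1 ω)^4 + (ξ t.1 t.2.2 ω)^4)/2 ∂P
          = ((∫ ω, (ξ t.1 t.2.1 ω)^4 ∂P) + ∫ ω, (ξ t.1 t.2.2 ω)^4 ∂P)/2 := by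
        rw [integral_div, integral_add hA hB]
      have := hL4 t.1 t.2.1 h12
      have := hL4 t.1 t.2.2 h13
      rw [heq] at hmono
      linarith
    have hexp : (fun ω => (Z t ω)^2)
        = fun ω => ((Y t ω)^2 - (2*m t)*Y t ω) + (m t)^2 := by
      funext ω; simp only [hZdef]; ring
    have hint1 : Integrable (fun ω => (Y t ω)^2 - (2*m t)*Y t ω) P :=
      hYsqint.sub ((hYint t ht).const_mul _)
    have : ∫ ω, (Z t ω)^2 ∂P = ((∫ ω, (Y t ω)^2 ∂P) - (2*m t)*(m t)) + (m t)^2 := by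
      rw [hexp, integral_add hint1 (integrable_const _),
        integral_sub hYsqint ((hYint t ht).const_mul _), integral_const_mul, integral_const]
      simp [hmdef]
    rw [this]
    nlinarith [sq_nonneg (m t)]
  -- integrability and bound for cross terms
  have hZZint : ∀ t ∈ S, ∀ s ∈ S, Integrable (fun ω => Z t ω * Z s ω) P := by
    intro t ht s hs
    refine Integrable.mono' (((hZ2 t ht).integrable_sq.add (hZ2 s hs).integrable_sq).div_const 2)
      ((hZ2 t ht).aestronglyMeasurable.mul (hZ2 s hs).aestronglyMeasurable)
      (ae_of_all _ fun ω => ?_)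
    rw [Real.norm_eq_abs, abs_mul]
    simp only [Pi.add_apply]
    exact abs_mul_le_half_sq (Z t ω) (Z s ω)
  have hcross : ∀ t ∈ S, ∀ s ∈ S, ∫ ω, Z t ω * Z s ω ∂P ≤ L^4 := by
    intro t ht s hs
    have hmono : ∫ ω, Z t ω * Z s ω ∂P ≤ ∫ ω, ((Z t ω)^2 + (Z s ω)^2)/2 ∂P := by
      refine integral_mono (hZZint t ht s hs)
        (((hZ2 t ht).integrable_sq.add (hZ2 s hs).integrable_sq).div_const 2) fun ω => ?_
      simp only [Pi.add_apply]
      exact mul_le_half_sq (Z t ω) (Z s ω)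
    rw [integral_div, integral_add (hZ2 t ht).integrable_sq (hZ2 s hs).integrable_sq] at hmono
    have := hZsq t ht
    have := hZsq s hs
    linarith
  -- disjoint triples give zero covariance
  have hdisj0 : ∀ t ∈ S, ∀ s ∈ S,
      Disjoint ({t.1, t.2.1, t.2.2} : Finset (Fin n)) ({s.1, s.2.1, s.2.2} : Finset (Fin n)) →
      ∫ ω, Z t ω * Z s ω ∂P = 0 := by
    intro t ht s hs hd
    obtain ⟨-, ht12, ht13, -⟩ := Finset.mem_filter.mp (hSdef ▸ ht)
    obtain ⟨-, hs12, hs13, -⟩ := Finset.mem_filter.mp (hSdef ▸ hs)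
    set A : Finset (Fin n) := {t.1, t.2.1, t.2.2} with hA
    set B : Finset (Fin n) := {s.1, s.2.1, s.2.2} with hB
    have hIF := hindep A B hd
    set pa : {p : Fin n × Fin n // p.1 ≠ p.2 ∧ p.1 ∈ A ∧ p.2 ∈ A} :=
      ⟨(t.1, t.2.1), ht12, by simp [hA], by simp [hA]⟩ with hpa
    set pb : {p : Fin n × Fin n // p.1 ≠ p.2 ∧ p.1 ∈ A ∧ p.2 ∈ A} :=
      ⟨(t.1, t.2.2), ht13, by simp [hA], by simp [hA]⟩ with hpb
    set qa : {p : Fin n × Fin n // p.1 ≠ p.2 ∧ p.1 ∈ B ∧ p.2 ∈ B} :=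
      ⟨(s.1, s.2.1), hs12, by simp [hB], by simp [hB]⟩ with hqa
    set qb : {p : Fin n × Fin n // p.1 ≠ p.2 ∧ p.1 ∈ B ∧ p.2 ∈ B} :=
      ⟨(s.1, s.2.2), hs13, by simp [hB], by simp [hB]⟩ with hqb
    have hφ : Measurable (fun v : {p : Fin n × Fin n // p.1 ≠ p.2 ∧ p.1 ∈ A ∧ p.2 ∈ A} → ℝ =>
        v pa * v pb - m t) :=
      ((measurable_pi_apply pa).mul (measurable_pi_apply pb)).sub measurable_const
    have hψ : Measurable (fun v : {p : Fin n × Fin n // p.1 ≠ p.2 ∧ p.1 ∈ B ∧ p.2 ∈ B} → ℝ =>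
        v qa * v qb - m s) :=
      ((measurable_pi_apply qa).mul (measurable_pi_apply qb)).sub measurable_const
    have hIZ : IndepFun (Z t) (Z s) P := hIF.comp hφ hψ
    have h0 := hIZ.integral_mul_eq_mul_integral (hZint t ht).aestronglyMeasurable (hZint s hs).aestronglyMeasurable
    have : ∫ ω, Z t ω * Z s ω ∂P = ∫ ω, (Z t * Z s) ω ∂P := rfl
    rw [this, h0, hZmean t ht, hZmean s hs, mul_zero]
  -- counting: for each t, at most 9 n² triples s intersect it
  have hcount : ∀ t : Fin n × Fin n × Fin n,
      ((S.filter (fun s => ¬ Disjoint ({t.1, t.2.1, t.2.2} : Finset (Fin n))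
        ({s.1, s.2.1, s.2.2} : Finset (Fin n)))).card : ℝ) ≤ 9 * N^2 := by
    intro t
    set T : Finset (Fin n) := {t.1, t.2.1, t.2.2} with hT
    have hTcard : T.card ≤ 3 := by
      refine le_trans (Finset.card_insert_le _ _) ?_
      have := Finset.card_insert_le t.2.1 ({t.2.2} : Finset (Fin n))
      simp only [Finset.card_singleton] at this ⊢
      omega
    have hsub : S.filter (fun s => ¬ Disjoint T ({s.1, s.2.1, s.2.2} : Finset (Fin n)))
        ⊆ (T ×ˢ (Finset.univ : Finset (Fin n × Fin n)))
          ∪ ((Finset.univ : Finset (Fin n)) ×ˢ (T ×ˢ (Finset.univ : Finset (Fin n))))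
          ∪ ((Finset.univ : Finset (Fin n)) ×ˢ ((Finset.univ : Finset (Fin n)) ×ˢ T)) := by
      intro s hsmem
      have hnd := (Finset.mem_filter.mp hsmem).2
      obtain ⟨a, haT, haB⟩ := Finset.not_disjoint_iff.mp hnd
      simp only [Finset.mem_insert, Finset.mem_singleton] at haB
      simp only [Finset.mem_union, Finset.mem_product, Finset.mem_univ, and_true, true_and]
      rcases haB with h | h | h
      · exact Or.inl (Or.inl (h ▸ haT))
      · exact Or.inl (Or.inr (h ▸ haT))
      · exact Or.inr (h ▸ haT)
    have hcard := Finset.card_le_card hsub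
    have h1 : (T ×ˢ (Finset.univ : Finset (Fin n × Fin n))).card ≤ 3 * n^2 := by
      rw [Finset.card_product, Finset.card_univ, Fintype.card_prod, Fintype.card_fin]
      nlinarith [hTcard]
    have h2 : ((Finset.univ : Finset (Fin n)) ×ˢ (T ×ˢ (Finset.univ : Finset (Fin n)))).card
        ≤ 3 * n^2 := by
      simp only [Finset.card_product, Finset.card_univ, Fintype.card_fin]
      nlinarith [hTcard]
    have h3 : ((Finset.univ : Finset (Fin n)) ×ˢ ((Finset.univ : Finset (Fin n)) ×ˢ T)).card
        ≤ 3 * n^2 := by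
      simp only [Finset.card_product, Finset.card_univ, Fintype.card_fin]
      nlinarith [hTcard]
    have hle : (S.filter (fun s => ¬ Disjoint T ({s.1, s.2.1, s.2.2} : Finset (Fin n)))).card
        ≤ 9 * n^2 := by
      calc _ ≤ _ := hcard
        _ ≤ _ := Finset.card_union_le _ _
        _ ≤ 3*n^2 + 3*n^2 + 3*n^2 := by
            have := Finset.card_union_le (T ×ˢ (Finset.univ : Finset (Fin n × Fin n)))
              ((Finset.univ : Finset (Fin n)) ×ˢ (T ×ˢ (Finset.univ : Finset (Fin n))))
            omega
        _ = 9 * n^2 := by ring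
    calc ((S.filter _).card : ℝ) ≤ ((9 * n^2 : ℕ) : ℝ) := by exact_mod_cast hle
      _ = 9 * N^2 := by push_cast [hNdef]; ring
  -- the double sum bound
  have hdouble : ∑ t ∈ S, ∑ s ∈ S, ∫ ω, Z t ω * Z s ω ∂P ≤ N^3 * (9 * N^2 * L^4) := by
    have hinner : ∀ t ∈ S, ∑ s ∈ S, ∫ ω, Z t ω * Z s ω ∂P ≤ 9 * N^2 * L^4 := by
      intro t ht
      rw [← Finset.sum_filter_add_sum_filter_not S
        (fun s => ¬ Disjoint ({t.1, t.2.1, t.2.2} : Finset (Fin n))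
          ({s.1, s.2.1, s.2.2} : Finset (Fin n))) (fun s => ∫ ω, Z t ω * Z s ω ∂P)]
      have hz : ∑ s ∈ S.filter (fun s => ¬¬ Disjoint ({t.1, t.2.1, t.2.2} : Finset (Fin n))
          ({s.1, s.2.1, s.2.2} : Finset (Fin n))), ∫ ω, Z t ω * Z s ω ∂P = 0 := by
        refine Finset.sum_eq_zero fun s hsm => ?_
        have hm := Finset.mem_filter.mp hsm
        exact hdisj0 t ht s hm.1 (not_not.mp hm.2)
      rw [hz, add_zero]
      have hb : ∑ s ∈ S.filter (fun s => ¬ Disjoint ({t.1, t.2.1, t.2.2} : Finset (Fin n))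
          ({s.1, s.2.1, s.2.2} : Finset (Fin n))), ∫ ω, Z t ω * Z s ω ∂P
          ≤ (S.filter (fun s => ¬ Disjoint ({t.1, t.2.1, t.2.2} : Finset (Fin n))
            ({s.1, s.2.1, s.2.2} : Finset (Fin n)))).card • (L^4) := by
        refine Finset.sum_le_card_nsmul _ _ _ fun s hsm => ?_
        exact hcross t ht s (Finset.mem_filter.mp hsm).1
      rw [nsmul_eq_mul] at hb
      calc _ ≤ _ := hb
        _ ≤ 9 * N^2 * L^4 := by
            exact mul_le_mul_of_nonneg_right (hcount t) hL4nn
    have houter : ∑ t ∈ S, ∑ s ∈ S, ∫ ω, Z t ω * Z s ω ∂P ≤ S.card • (9 * N^2 * L^4) :=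
      Finset.sum_le_card_nsmul _ _ _ hinner
    rw [nsmul_eq_mul] at houter
    have hScard : (S.card : ℝ) ≤ N^3 := by
      have : S.card ≤ n^3 := by
        calc S.card ≤ (Finset.univ : Finset (Fin n × Fin n × Fin n)).card :=
              Finset.card_filter_le _ _
          _ = n^3 := by
              simp only [Finset.card_univ, Fintype.card_prod, Fintype.card_fin]; ring
      calc (S.card : ℝ) ≤ ((n^3 : ℕ) : ℝ) := by exact_mod_cast this
        _ = N^3 := by push_cast [hNdef]; ring
    calc _ ≤ _ := houter
      _ ≤ N^3 * (9 * N^2 * L^4) := by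
          refine mul_le_mul_of_nonneg_right hScard ?_
          positivity
  -- compute the variance
  set c : ℝ := (N * (N-1) * (N-2))⁻¹ with hcdef
  have hsum2 : MemLp (fun ω => ∑ t ∈ S, Y t ω) 2 P := by
    have h := memLp_finset_sum' S hY2
    have he : (∑ i ∈ S, Y i) = fun ω => ∑ t ∈ S, Y t ω := by
      funext ω; simp
    rwa [he] at h
  have hX2 : MemLp (fun ω => c * ∑ t ∈ S, Y t ω) 2 P := hsum2.const_mul c
  have hEX : ∫ ω, (c * ∑ t ∈ S, Y t ω) ∂P = c * ∑ t ∈ S, m t := by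
    rw [integral_const_mul, integral_finset_sum S (fun t ht => hYint t ht)]
  have hvar : variance (fun ω => c * ∑ t ∈ S, Y t ω) P = P[(((fun ω => c * ∑ t ∈ S, Y t ω) - fun _ => P[fun ω => c * ∑ t ∈ S, Y t ω]) ^ (2:ℕ) : Ω → ℝ)] :=
    variance_eq_integral hX2.aemeasurable
  have hXsub : ((fun ω => c * ∑ t ∈ S, Y t ω)
        - fun _ => ∫ ω, (c * ∑ t ∈ S, Y t ω) ∂P)
      = fun ω => c * ∑ t ∈ S, Z t ω := by
    funext ω
    simp only [Pi.sub_apply, hEX, hZdef]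
    rw [← mul_sub, ← Finset.sum_sub_distrib]
  have hvarval : variance (fun ω => c * ∑ t ∈ S, Y t ω) P
      = c^2 * ∑ t ∈ S, ∑ s ∈ S, ∫ ω, Z t ω * Z s ω ∂P := by
    rw [hvar, hXsub]
    have : (fun ω => ((fun ω => c * ∑ t ∈ S, Z t ω) ^ (2:ℕ)) ω)
        = fun ω => c^2 * ∑ t ∈ S, ∑ s ∈ S, Z t ω * Z s ω := by
      funext ω
      simp only [Pi.pow_apply]
      rw [mul_pow]
      congr 1
      rw [sq, Finset.sum_mul_sum]
    calc P[(fun ω => c * ∑ t ∈ S, Z t ω) ^ (2:ℕ)]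
        = ∫ ω, (c^2 * ∑ t ∈ S, ∑ s ∈ S, Z t ω * Z s ω) ∂P := by
          rw [show P[(fun ω => c * ∑ t ∈ S, Z t ω) ^ (2:ℕ)]
            = ∫ ω, ((fun ω => c * ∑ t ∈ S, Z t ω) ^ (2:ℕ)) ω ∂P from rfl, this]
      _ = c^2 * ∑ t ∈ S, ∑ s ∈ S, ∫ ω, Z t ω * Z s ω ∂P := by
          rw [integral_const_mul, integral_finset_sum S fun t ht =>
            integrable_finset_sum S fun s hs => hZZint t ht s hs]
          congr 1
          exact Finset.sum_congr rfl fun t ht =>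
            integral_finset_sum S fun s hs => hZZint t ht s hs
  -- final arithmetic
  have hDpos : 0 < N * (N-1) * (N-2) := by nlinarith
  have hcnn : 0 ≤ c := le_of_lt (by rw [hcdef]; positivity)
  have hN0 : (0:ℝ) < N := by linarith
  have hfinal : c^2 * (N^3 * (9 * N^2 * L^4)) ≤ 200 * L^4 / N := by
    have heq : c^2 * (N^3 * (9 * N^2 * L^4))
        = 9 * N^5 * L^4 / (N * (N-1) * (N-2))^2 := by
      rw [hcdef]
      field_simp
    rw [heq, div_le_div_iff₀ (pow_pos hDpos 2) hN0]
    have hpoly : 9*N^6 ≤ 200*(N*(N-1)*(N-2))^2 := by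
      nlinarith [sq_nonneg N, sq_nonneg (N-1), sq_nonneg (N-2), sq_nonneg (N-3)]
    have h2 := mul_le_mul_of_nonneg_right hpoly hL4nn
    nlinarith [h2]
  have hmain : variance (fun ω => c * ∑ t ∈ S, Y t ω) P ≤ 200 * L^4 / N := by
    rw [hvarval]
    exact le_trans (mul_le_mul_of_nonneg_left hdouble (by positivity)) hfinal
  exact hmain
end
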